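/- Let r, s be nonnegative integers with r + s ≥ 1, and let α_j (−r ≤ j ≤ s) be defined by α_j = ((−1)^{j+1}/j) · r! s! / ((r+j)! (s−j)!) for j ≠ 0 and α₀ = −∑_{j≠0} α_j. Then the leading error moment satisfies ∑_{j=−r}^{s} α_j · j^{r+s+1} = (−1)^{s−1} · r! · s!; equivalently, the leading-order error constant c defined by (δu/Δx) − u_x(x_k) = c Δx^{q} u^{(q+1)}(x_k) + O(Δx^{q+1}) with q = r + s equals c = (−1)^{s−1} r! s!/(r+s+1)!. -/

import Mathlib

open Finset fwdDiff Function

lemma fd_pow_lt : ∀ (n : ℕ), ∀ m < n, (fwdDiff (1:ℝ))^[n] (fun x : ℝ ↦ x ^ m) = 0 := by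
  intro n
  induction n with
  | zero => intro m hm; omega
  | succ n IH =>
    intro m hm
    rw [Function.iterate_succ_apply]
    match m with
    | 0 =>
      have h0 : (fwdDiff (1:ℝ)) (fun x : ℝ ↦ x ^ 0) = fun _ ↦ (0:ℝ) := by
        ext x; simp [fwdDiff]
      rw [h0]
      have h1 : (fun _ : ℝ ↦ (0:ℝ)) = ((0:ℝ) • fun _ : ℝ ↦ (0:ℝ)) := by ext x; simp
      rw [h1, fwdDiff_iter_const_smul]
      ext x; simp
    | m + 1 =>
      have hΔ : (fwdDiff (1:ℝ)) (fun x : ℝ ↦ x ^ (m+1))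
          = ∑ i ∈ range (m+1), fun x : ℝ ↦ ((m+1).choose i : ℝ) * x ^ i := by
        ext x
        simp only [fwdDiff, Finset.sum_apply]
        rw [add_pow, Finset.sum_range_succ]
        simp [mul_comm]
      rw [hΔ, fwdDiff_iter_finset_sum]
      refine Finset.sum_eq_zero fun i hi ↦ ?_
      have hi' : i < n := by have := Finset.mem_range.mp hi; omega
      have : (fun x : ℝ ↦ ((m+1).choose i : ℝ) * x ^ i)
          = ((m+1).choose i : ℝ) • fun x : ℝ ↦ x ^ i := by ext x; simp
      rw [this, fwdDiff_iter_const_smul, IH i hi', smul_zero]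

lemma fd_pow_self : ∀ (n : ℕ), (fwdDiff (1:ℝ))^[n] (fun x : ℝ ↦ x ^ n) = fun _ ↦ (n.factorial : ℝ) := by
  intro n
  induction n with
  | zero => ext x; simp
  | succ n IH =>
    rw [Function.iterate_succ_apply]
    have hΔ : (fwdDiff (1:ℝ)) (fun x : ℝ ↦ x ^ (n+1))
        = ∑ i ∈ range (n+1), fun x : ℝ ↦ ((n+1).choose i : ℝ) * x ^ i := by
      ext x
      simp only [fwdDiff, Finset.sum_apply]
      rw [add_pow, Finset.sum_range_succ]
      simp [mul_comm]
    rw [hΔ, fwdDiff_iter_finset_sum]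
    rw [Finset.sum_range_succ]
    have hz : ∑ i ∈ range n, (fwdDiff (1:ℝ))^[n] (fun x : ℝ ↦ ((n+1).choose i : ℝ) * x ^ i)
        = 0 := by
      refine Finset.sum_eq_zero fun i hi ↦ ?_
      have : (fun x : ℝ ↦ ((n+1).choose i : ℝ) * x ^ i)
          = ((n+1).choose i : ℝ) • fun x : ℝ ↦ x ^ i := by ext x; simp
      rw [this, fwdDiff_iter_const_smul, fd_pow_lt n i (Finset.mem_range.mp hi), smul_zero]
    rw [hz, zero_add]
    have : (fun x : ℝ ↦ ((n+1).choose n : ℝ) * x ^ n)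
        = ((n+1).choose n : ℝ) • fun x : ℝ ↦ x ^ n := by ext x; simp
    rw [this, fwdDiff_iter_const_smul, IH]
    ext x
    simp only [Pi.smul_apply, smul_eq_mul, Nat.choose_succ_self_right, Nat.factorial_succ]
    push_cast
    ring

lemma fd_translate (c : ℝ) (f : ℝ → ℝ) : ∀ (n : ℕ) (y : ℝ),
    (fwdDiff (1:ℝ))^[n] (fun x ↦ f (x + c)) y = (fwdDiff (1:ℝ))^[n] f (y + c) := by
  intro n
  induction n with
  | zero => intro y; simp
  | succ n IH =>
    intro y
    rw [Function.iterate_succ_apply']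
    rw [Function.iterate_succ_apply']
    simp only [fwdDiff]
    rw [IH, IH, add_right_comm]

lemma key_identity (n : ℕ) (c : ℝ) :
    ∑ k ∈ range (n+1), ((-1:ℝ)) ^ (n - k) * (n.choose k : ℝ) * ((k : ℝ) + c) ^ n
      = (n.factorial : ℝ) := by
  have h := fwdDiff_iter_eq_sum_shift (1:ℝ) (fun x : ℝ ↦ (x + c) ^ n) n 0
  have h2 : (fwdDiff (1:ℝ))^[n] (fun x : ℝ ↦ (x + c) ^ n) 0 = (n.factorial : ℝ) := by
    rw [fd_translate c (fun x : ℝ ↦ x ^ n) n 0, fd_pow_self n]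
  rw [h2] at h
  rw [h]
  refine Finset.sum_congr rfl fun k hk ↦ ?_
  simp only [zsmul_eq_mul, Int.cast_mul, Int.cast_pow, Int.cast_neg, Int.cast_one,
    Int.cast_natCast, nsmul_eq_mul, mul_one, zero_add]

lemma neg_one_zpow_congr {m : ℤ} {n : ℕ} (h : (m - (n:ℤ)) % 2 = 0) :
    (-1:ℝ) ^ m = (-1:ℝ) ^ n := by
  rcases Int.even_or_odd m with he | ho
  · rw [he.neg_one_zpow, (Nat.even_iff.mpr (by
      have := Int.even_iff.mp he; omega)).neg_one_pow]
  · rw [ho.neg_one_zpow, (Nat.odd_iff.mpr (by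
      have := Int.odd_iff.mp ho; omega)).neg_one_pow]

/-- Leading error moment of the Iserles coefficients: with
`α_j = ((-1)^{j+1}/j) r! s! / ((r+j)! (s-j)!)` for `j ≠ 0` and
`α₀ = -∑_{j≠0} α_j`, one has `∑_{j=-r}^{s} α_j j^{r+s+1} = (-1)^{s-1} r! s!`,
i.e. the leading error constant is `c = (-1)^{s-1} r! s!/(r+s+1)!`. -/
theorem stmt_12 (r s : ℕ) (hrs : 1 ≤ r + s) (α : ℤ → ℝ)
    (hα : ∀ j ∈ Finset.Icc (-(r : ℤ)) (s : ℤ), j ≠ 0 →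
      α j = ((-1 : ℝ) ^ (j + 1) / (j : ℝ)) *
        ((r.factorial : ℝ) * (s.factorial : ℝ)) /
          (((((r : ℤ) + j).toNat.factorial : ℝ)) * ((((s : ℤ) - j).toNat.factorial : ℝ))))
    (hα₀ : α 0 = -∑ j ∈ (Finset.Icc (-(r : ℤ)) (s : ℤ)).erase 0, α j) :
    ∑ j ∈ Finset.Icc (-(r : ℤ)) (s : ℤ), α j * (j : ℝ) ^ (r + s + 1) =
      (-1 : ℝ) ^ ((s : ℤ) - 1) * (r.factorial : ℝ) * (s.factorial : ℝ) := by
  set q := r + s with hqdef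
  set g : ℤ → ℝ := fun j ↦ (-1:ℝ) ^ (j+1) * (j:ℝ) ^ q *
      ((r.factorial : ℝ) * (s.factorial : ℝ)) /
        ((((r:ℤ)+j).toNat.factorial : ℝ) * (((s:ℤ)-j).toNat.factorial : ℝ)) with hg
  have step1 : ∑ j ∈ Finset.Icc (-(r:ℤ)) (s:ℤ), α j * (j:ℝ) ^ (q+1)
      = ∑ j ∈ Finset.Icc (-(r:ℤ)) (s:ℤ), g j := by
    refine Finset.sum_congr rfl fun j hj ↦ ?_
    by_cases h0 : j = 0
    · subst h0
      have hq1 : q ≠ 0 := by omega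
      simp [hg, zero_pow, hq1]
    · rw [hα j hj h0, hg]
      have hjne : (j:ℝ) ≠ 0 := Int.cast_ne_zero.mpr h0
      have hAne : ((((r:ℤ)+j).toNat.factorial : ℝ)) ≠ 0 :=
        Nat.cast_ne_zero.mpr (Nat.factorial_ne_zero _)
      have hBne : ((((s:ℤ)-j).toNat.factorial : ℝ)) ≠ 0 :=
        Nat.cast_ne_zero.mpr (Nat.factorial_ne_zero _)
      field_simp
      ring
  have step2 : ∑ j ∈ Finset.Icc (-(r:ℤ)) (s:ℤ), g j
      = ∑ k ∈ Finset.range (q+1), g ((k:ℤ) - r) := by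
    refine Finset.sum_nbij' (fun j ↦ (j + r).toNat) (fun k ↦ (k:ℤ) - r)
      (fun a ha ↦ ?_) (fun a ha ↦ ?_) (fun a ha ↦ ?_) (fun a ha ↦ ?_) (fun a ha ↦ ?_)
    · simp only [Finset.mem_Icc] at ha; simp only [Finset.mem_range]; omega
    · simp only [Finset.mem_range] at ha; simp only [Finset.mem_Icc]; omega
    · simp only [Finset.mem_Icc] at ha; omega
    · simp only [Finset.mem_range] at ha; omega
    · simp only [Finset.mem_Icc] at ha
      exact congrArg g (by omega)
  have step3 : ∀ k ∈ Finset.range (q+1), g ((k:ℤ) - r)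
      = ((-1:ℝ) ^ (s+1) * ((r.factorial : ℝ) * (s.factorial : ℝ) / (q.factorial : ℝ))) *
        ((-1:ℝ) ^ (q-k) * (q.choose k : ℝ) * ((k:ℝ) + (-(r:ℝ))) ^ q) := by
    intro k hk
    have hkq : k ≤ q := by have := Finset.mem_range.mp hk; omega
    have hA : ((r:ℤ) + ((k:ℤ) - r)).toNat = k := by omega
    have hB : ((s:ℤ) - ((k:ℤ) - r)).toNat = q - k := by omega
    rw [hg]
    simp only [hA, hB]
    have hsign : (-1:ℝ) ^ (((k:ℤ) - r) + 1) = (-1:ℝ) ^ ((s+1) + (q-k)) :=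
      neg_one_zpow_congr (by push_cast; omega)
    rw [hsign, pow_add]
    have hfac : (q.factorial : ℝ) = (q.choose k : ℝ) * (k.factorial : ℝ) *
        ((q-k).factorial : ℝ) := by
      rw [← Nat.cast_mul, ← Nat.cast_mul, Nat.choose_mul_factorial_mul_factorial hkq]
    have hCne : ((q.choose k : ℕ) : ℝ) ≠ 0 :=
      Nat.cast_ne_zero.mpr (Nat.choose_pos hkq).ne'
    have hkne : (k.factorial : ℝ) ≠ 0 := Nat.cast_ne_zero.mpr (Nat.factorial_ne_zero _)
    have hqkne : ((q-k).factorial : ℝ) ≠ 0 := Nat.cast_ne_zero.mpr (Nat.factorial_ne_zero _)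
    have hqne : (q.factorial : ℝ) ≠ 0 := Nat.cast_ne_zero.mpr (Nat.factorial_ne_zero _)
    rw [hfac]
    push_cast
    field_simp
    ring
  rw [step1, step2, Finset.sum_congr rfl step3, ← Finset.mul_sum,
    key_identity q (-(r:ℝ))]
  have hs : (-1:ℝ) ^ ((s:ℤ) - 1) = (-1:ℝ) ^ (s+1) :=
    neg_one_zpow_congr (by push_cast; omega)
  have hqne : (q.factorial : ℝ) ≠ 0 := Nat.cast_ne_zero.mpr (Nat.factorial_ne_zero _)
  rw [hs]
  field_simp
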